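/- Let (X, ℤ) be a minimal dynamical system on a compact metric space X, U ⊆ X a nonempty open set, φ : X → [0,1] continuous with φ = 1 on X \ U and φ⁻¹(0) having nonempty interior, and let ξ : X → ℝ be the associated Lindenstrauss level function ξ(x) = Σ_{j≥1} j·φ(x)φ(x−1)⋯φ(x−j+1)(1−φ(x−j)). Then ξ(x+1) = φ(x+1)·(ξ(x)+1) for every x ∈ X. -/

import Mathlib

/-- The action of `z ∈ ℤ` on `X` generated by the homeomorphism `T`:  `x + z = T^z x`. -/
def actZ {X : Type*} [TopologicalSpace X] (T : X ≃ₜ X) (z : ℤ) (x : X) : X :=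
  (T.toEquiv ^ z) x

/-- The `j`-th term of the series defining Lindenstrauss' level function:
`j · φ(x)·φ(x−1)⋯φ(x−j+1)·(1−φ(x−j))`. -/
noncomputable def levelTerm {X : Type*} [TopologicalSpace X] (T : X ≃ₜ X)
    (φ : X → ℝ) (j : ℕ) (x : X) : ℝ :=
  (j : ℝ) * (∏ i ∈ Finset.range j, φ (actZ T (-(i : ℤ)) x)) * (1 - φ (actZ T (-(j : ℤ)) x))

lemma actZ_continuous {X : Type*} [TopologicalSpace X] (T : X ≃ₜ X) (z : ℤ) :
    Continuous (actZ T z) := by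
  have h : ∀ n : ℕ, Continuous fun x : X => (T.toEquiv ^ n) x := fun n => by
    simp only [Equiv.Perm.coe_pow]
    exact T.continuous.iterate n
  obtain ⟨n⟩ | ⟨n⟩ := z
  · show Continuous fun x => (T.toEquiv ^ ((n : ℕ) : ℤ)) x
    simpa [zpow_natCast] using h n
  · have h2 : Continuous fun x : X => ((T.toEquiv)⁻¹ ^ (n+1)) x := by
      simp only [Equiv.Perm.coe_pow]
      have e : (T.toEquiv)⁻¹ = T.symm.toEquiv := rfl
      rw [e]
      exact T.symm.continuous.iterate _
    show Continuous fun x => (T.toEquiv ^ (Int.negSucc n)) x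
    simpa [actZ, zpow_negSucc, inv_pow] using h2

lemma actZ_add {X : Type*} [TopologicalSpace X] (T : X ≃ₜ X) (a b : ℤ) (x : X) :
    actZ T a (actZ T b x) = actZ T (a + b) x := by
  unfold actZ; rw [zpow_add, Equiv.Perm.mul_apply]

theorem stmt_8 {X : Type*} [MetricSpace X] [CompactSpace X]
    (T : X ≃ₜ X)
    (hmin : ∀ x : X, Dense (Set.range fun z : ℤ => actZ T z x))
    (U : Set X) (hUopen : IsOpen U) (hUne : U.Nonempty)
    (φ : X → ℝ) (hφcont : Continuous φ) (hφ01 : ∀ x, φ x ∈ Set.Icc (0 : ℝ) 1)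
    (hφU : ∀ x ∉ U, φ x = 1)
    (hφ0 : (interior (φ ⁻¹' {0})).Nonempty)
    -- ξ is the Lindenstrauss level function
    (ξ : X → ℝ) (hξ : ∀ x, ξ x = ∑' j : ℕ, levelTerm T φ j x) :
    ∀ x : X, ξ (actZ T 1 x) = φ (actZ T 1 x) * (ξ x + 1) := by
  -- Step 1: every backward orbit hits the zero set of φ.
  have hzero : ∀ x : X, ∃ k : ℕ, φ (actZ T (-(k : ℤ)) x) = 0 := by
    set V := interior (φ ⁻¹' {0}) with hV
    have hVopen : IsOpen V := isOpen_interior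
    have hcover : (Set.univ : Set X) ⊆ ⋃ z : ℤ, (actZ T z) ⁻¹' V := by
      intro p _
      obtain ⟨q, ⟨z, rfl⟩, hqV⟩ := (hmin p).exists_mem_open hVopen hφ0
      exact Set.mem_iUnion.2 ⟨z, hqV⟩
    obtain ⟨F, hF⟩ := isCompact_univ.elim_finite_subcover
      (fun z : ℤ => (actZ T z) ⁻¹' V)
      (fun z => hVopen.preimage (actZ_continuous T z)) hcover
    obtain ⟨M, hM⟩ := F.exists_le
    intro x
    have hx' := hF (Set.mem_univ (actZ T (-M) x))
    rw [Set.mem_iUnion₂] at hx'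
    obtain ⟨z, hzF, hz⟩ := hx'
    rw [Set.mem_preimage, actZ_add] at hz
    refine ⟨(M - z).toNat, ?_⟩
    have hMz : (0 : ℤ) ≤ M - z := by have := hM z hzF; omega
    have : -(((M - z).toNat : ℤ)) = z + -M := by
      rw [Int.toNat_of_nonneg hMz]; ring
    rw [this]
    have := interior_subset hz
    simpa using this
  intro x
  obtain ⟨k0, hk0⟩ := hzero x
  set y := actZ T 1 x with hy
  set f : ℕ → ℝ := fun i => φ (actZ T (-(i : ℤ)) x) with hf
  set P : ℕ → ℝ := fun j => ∏ i ∈ Finset.range j, f i with hP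
  -- shifted values
  have hfy : ∀ i : ℕ, φ (actZ T (-((i : ℤ) + 1)) y) = f i := by
    intro i
    rw [hy, actZ_add, show (-((i : ℤ) + 1) + 1) = -(i : ℤ) by ring]
  have hfy0 : φ (actZ T (-((0 : ℕ) : ℤ)) y) = φ y := by
    norm_num [actZ]
  -- vanishing of products
  have hPzero : ∀ j : ℕ, k0 < j → P j = 0 := by
    intro j hj
    exact Finset.prod_eq_zero (Finset.mem_range.2 hj) hk0
  have hltx0 : ∀ j : ℕ, k0 < j → levelTerm T φ j x = 0 := by
    intro j hj
    have : (∏ i ∈ Finset.range j, φ (actZ T (-(i : ℤ)) x)) = 0 := hPzero j hj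
    rw [levelTerm, this, mul_zero, zero_mul]
  have hlty0 : ∀ j : ℕ, k0 + 1 < j → levelTerm T φ j y = 0 := by
    intro j hj
    have hmem : k0 + 1 ∈ Finset.range j := Finset.mem_range.2 hj
    have hfac : φ (actZ T (-((k0 + 1 : ℕ) : ℤ)) y) = 0 := by
      push_cast
      rw [hfy k0]; exact hk0
    have : (∏ i ∈ Finset.range j, φ (actZ T (-(i : ℤ)) y)) = 0 :=
      Finset.prod_eq_zero hmem hfac
    rw [levelTerm, this, mul_zero, zero_mul]
  -- tsums are finite sums
  have hxsum : ξ x = ∑ j ∈ Finset.range (k0 + 1), levelTerm T φ j x := by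
    rw [hξ]
    exact tsum_eq_sum (fun j hj => hltx0 j (by rw [Finset.mem_range] at hj; omega))
  have hysum : ξ y = ∑ j ∈ Finset.range (k0 + 2), levelTerm T φ j y := by
    rw [hξ]
    refine tsum_eq_sum (fun j hj => hlty0 j ?_)
    rw [Finset.mem_range] at hj; omega
  -- key term identity
  have hterm : ∀ j : ℕ, levelTerm T φ (j + 1) y
      = φ y * (levelTerm T φ j x + (P j - P (j + 1))) := by
    intro j
    rw [levelTerm, Finset.prod_range_succ']
    have hprod : (∏ i ∈ Finset.range j, φ (actZ T (-((i : ℤ) + 1)) y)) = P j := by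
      exact Finset.prod_congr rfl (fun i _ => hfy i)
    have e1 : ∀ i : ℕ, φ (actZ T (-((i + 1 : ℕ) : ℤ)) y) = φ (actZ T (-((i : ℤ) + 1)) y) := by
      intro i; push_cast; ring_nf
    rw [Finset.prod_congr rfl (fun i _ => e1 i), hprod, hfy0]
    have e2 : φ (actZ T (-((j + 1 : ℕ) : ℤ)) y) = f j := by
      push_cast; exact hfy j
    rw [e2, levelTerm]
    have hPj : (∏ i ∈ Finset.range j, φ (actZ T (-(i : ℤ)) x)) = P j := rfl
    have hPsucc : P (j + 1) = P j * f j := Finset.prod_range_succ f j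
    rw [hPj, hPsucc]
    push_cast
    ring
  -- put everything together
  rw [hysum, Finset.sum_range_succ']
  have hzero0 : levelTerm T φ 0 y = 0 := by simp [levelTerm]
  rw [hzero0, add_zero]
  have : ∑ j ∈ Finset.range (k0 + 1), levelTerm T φ (j + 1) y
      = φ y * ((∑ j ∈ Finset.range (k0 + 1), levelTerm T φ j x)
        + ∑ j ∈ Finset.range (k0 + 1), (P j - P (j + 1))) := by
    rw [Finset.sum_congr rfl (fun j _ => hterm j), ← Finset.mul_sum, Finset.sum_add_distrib]
  rw [this, Finset.sum_range_sub' P]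
  have hP0 : P 0 = 1 := by simp [hP]
  have hPk : P (k0 + 1) = 0 := hPzero _ (Nat.lt_succ_self k0)
  rw [hP0, hPk, ← hxsum]
  ring
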